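/- Let n ≥ 1. In the formal power series ring ℚ[[t,q]], one has Σ_π ω^c_π · t^{π(1,…,1)} · q^{|π|} = exp( t·(M_{n−1}(q) − 1) ), where the sum is over all n-partitions π (including the empty one), M₀(q) := Σ_{i ≥ 0} qⁱ, and for n ≥ 2, M_{n−1}(q) := Σ_{i ≥ 0} P_{n−1}(i)·qⁱ with P_{n−1}(i) the number of (n−1)-partitions of size i. (The sum is well defined since for each b there are only finitely many n-partitions of size b.) -/

import Mathlib

/-!
STATEMENT 14: Let n ≥ 1.  In ℚ[[t,q]]:
  Σ_π ω^c_π · t^{π(1,…,1)} · q^{|π|} = exp( t·(M_{n−1}(q) − 1) ),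
the sum being over all n-partitions π, where M₀(q) = Σ_i qⁱ and, for n ≥ 2,
M_{n−1}(q) = Σ_i P_{n−1}(i)·qⁱ with P_{n−1}(i) the number of (n−1)-partitions of
size i.

Modelling: partitions are 0-indexed weakly decreasing finitely supported functions
ℕⁿ → ℕ (so 0-partitions are constants c, of size c, matching M₀(q) = Σ qⁱ, and
π(1,…,1) is π.toFun 0); ℚ[[t,q]] is `PowerSeries (PowerSeries ℚ)` (outer variable
t, inner variable q); and exp(t·X), for X = M_{n−1}(q) − 1 with zero constant
term, is the series Σ_a t^a·X^a/a!.  The (finite) sums and products defining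
ω^c_π and the coefficients are `finsum`/`finprod`.
-/

/-- An `n`-partition: a function π : ℕⁿ → ℕ (0-indexed version of (ℤ_{≥1})ⁿ → ℕ),
weakly decreasing in each coordinate and with finite support. -/
structure NPartition (n : ℕ) where
  toFun : (Fin n → ℕ) → ℕ
  antitone : ∀ ⦃i j : Fin n → ℕ⦄, (∀ a, i a ≤ j a) → toFun j ≤ toFun i
  finite : (Function.support toFun).Finite

/-- The size |π| = Σ_i π(i). -/
noncomputable def NPartition.size {n : ℕ} (π : NPartition n) : ℕ := ∑ᶠ i, π.toFun i

/-- The binary representation of an (n−1)-partition ξ, as a function ℕⁿ → ℕ: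
value 1 at j iff j_n < ξ(j₁,…,j_{n−1}) (0-indexed), and 0 otherwise. -/
def binFun (n : ℕ) (hn : 1 ≤ n) (ξ : NPartition (n - 1)) : (Fin n → ℕ) → ℕ :=
  fun j => if j ⟨n - 1, by omega⟩ < ξ.toFun (fun a => j (Fin.castLE (Nat.sub_le n 1) a))
    then 1 else 0

/-- The set 𝒞_π of finitely supported ℕ-valued functions m on the nonempty
(n−1)-partitions such that π = Σ_ξ m_ξ · (binary representation of ξ). -/
def Cset (n : ℕ) (hn : 1 ≤ n) (π : NPartition n) :
    Set ({ξ : NPartition (n - 1) // ξ.toFun ≠ 0} → ℕ) :=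
  {m | (Function.support m).Finite ∧
    ∀ j : Fin n → ℕ, π.toFun j = ∑ᶠ ξ, m ξ * binFun n hn ξ.1 j}

/-- The combinatorial weight ω^c_π = Σ_{m ∈ 𝒞_π} Π_ξ 1/(m_ξ)!. -/
noncomputable def omegaC (n : ℕ) (hn : 1 ≤ n) (π : NPartition n) : ℚ :=
  ∑ᶠ m ∈ Cset n hn π, ∏ᶠ ξ, (1 / (Nat.factorial (m ξ)) : ℚ)

/-- The generating series M_n(q) = Σ_i P_n(i)·qⁱ of n-partitions. -/
noncomputable def Mser (n : ℕ) : PowerSeries ℚ :=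
  PowerSeries.mk fun i => (Nat.card {π : NPartition n // π.size = i} : ℚ)

namespace NPartition

lemma ext' {n : ℕ} {π π' : NPartition n} (h : π.toFun = π'.toFun) : π = π' := by
  cases π; cases π'; simpa using h

lemma size_eq_sum {n : ℕ} (π : NPartition n) :
    π.size = ∑ i ∈ π.finite.toFinset, π.toFun i :=
  finsum_eq_sum _ π.finite

lemma toFun_le_size {n : ℕ} (π : NPartition n) (i : Fin n → ℕ) : π.toFun i ≤ π.size :=
  single_le_finsum i π.finite (fun _ => Nat.zero_le _)

lemma card_support_le_size {n : ℕ} (π : NPartition n) :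
    π.finite.toFinset.card ≤ π.size := by
  rw [size_eq_sum]
  simpa using Finset.card_nsmul_le_sum π.finite.toFinset π.toFun 1
    (fun x hx => by have := π.finite.mem_toFinset.1 hx; simp only [Function.mem_support] at this; omega)

lemma toFun_eq_zero_of_size_eq_zero {n : ℕ} {π : NPartition n} (h : π.size = 0) :
    π.toFun = 0 := by
  funext i
  by_contra hi
  have h1 : 1 ≤ π.toFun i := Nat.one_le_iff_ne_zero.2 hi
  have := π.toFun_le_size i
  omega

lemma toFun_eq_zero_of_big {n b : ℕ} {π : NPartition n} (h : π.size ≤ b)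
    {i : Fin n → ℕ} {a : Fin n} (ha : b < i a) : π.toFun i = 0 := by
  by_contra hi
  -- the points `Function.update i a t` for `t ≤ b` are in the support
  have hmem : ∀ t : Fin (b + 1), Function.update i a (t : ℕ) ∈ π.finite.toFinset := by
    intro t
    rw [Set.Finite.mem_toFinset, Function.mem_support]
    have hle : π.toFun i ≤ π.toFun (Function.update i a (t : ℕ)) := by
      apply π.antitone
      intro c
      rcases eq_or_ne c a with rfl | hc
      · simp only [Function.update_self]; omega
      · simp [Function.update_of_ne hc]
    intro h0; rw [h0] at hle; omega
  have hinj : Function.Injective (fun t : Fin (b + 1) => Function.update i a (t : ℕ)) := by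
    intro s t hst
    have := congrFun hst a
    simp only [Function.update_self] at this
    exact Fin.ext (by exact_mod_cast this)
  have hcard : b + 1 ≤ π.finite.toFinset.card := by
    classical
    have := Finset.card_le_card_of_injOn (s := Finset.univ)
      (fun t : Fin (b+1) => Function.update i a (t : ℕ))
      (fun t _ => hmem t) (fun s _ t _ h => hinj h)
    simpa using this
  have := π.card_support_le_size
  omega

lemma finite_size_le (n b : ℕ) : {π : NPartition n | π.size ≤ b}.Finite := by
  classical
  have : Function.Injective (fun π : {π : NPartition n | π.size ≤ b} =>
      (fun i : Fin n → Fin (b + 1) => (⟨π.1.toFun (fun a => (i a : ℕ)),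
        by have := π.1.toFun_le_size (fun a => (i a : ℕ)); have h2 : π.1.size ≤ b := π.2; omega⟩ : Fin (b+1)))) := by
    rintro ⟨π, hπ⟩ ⟨π', hπ'⟩ h
    simp only [Subtype.mk.injEq]
    apply ext'
    funext i
    by_cases hbig : ∀ a, i a ≤ b
    · have := congrFun h (fun a => ⟨i a, by have := hbig a; omega⟩)
      simpa using this
    · push_neg at hbig
      obtain ⟨a, ha⟩ := hbig
      rw [toFun_eq_zero_of_big hπ ha, toFun_eq_zero_of_big hπ' ha]
  haveI : Finite {π : NPartition n | π.size ≤ b} := Finite.of_injective _ this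
  exact Set.toFinite _

end NPartition
section Bin

variable {m : ℕ} (hm : 1 ≤ m + 1)

/-- the pairing equivalence -/
def snocEquiv (m : ℕ) : ((Fin m → ℕ) × ℕ) ≃ (Fin (m + 1) → ℕ) where
  toFun p := Fin.snoc p.1 p.2
  invFun j := (Fin.init j, j (Fin.last m))
  left_inv p := by simp [Fin.init_snoc, Fin.snoc_last]
  right_inv j := by simp [Fin.snoc_init_self]

lemma binFun_snoc (ξ : NPartition m) (h : Fin m → ℕ) (l : ℕ) :
    binFun (m + 1) hm ξ (Fin.snoc h l) = if l < ξ.toFun h then 1 else 0 := by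
  have e2 : (fun a : Fin (m+1-1) => (Fin.snoc h l : Fin (m+1) → ℕ)
      (Fin.castLE (Nat.sub_le (m+1) 1) a)) = h := by
    funext a
    have : Fin.castLE (Nat.sub_le (m+1) 1) a = Fin.castSucc a := rfl
    rw [this, Fin.snoc_castSucc]
  have e1 : (⟨m + 1 - 1, by omega⟩ : Fin (m+1)) = Fin.last m := rfl
  simp only [binFun, e1, e2, Fin.snoc_last]

lemma binFun_eq (ξ : NPartition m) (j : Fin (m+1) → ℕ) :
    binFun (m + 1) hm ξ j = if j (Fin.last m) < ξ.toFun (Fin.init j) then 1 else 0 := by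
  conv_lhs => rw [← Fin.snoc_init_self j]
  rw [binFun_snoc]

lemma binFun_le_one (ξ : NPartition m) (j : Fin (m+1) → ℕ) :
    binFun (m + 1) hm ξ j ≤ 1 := by
  rw [binFun_eq]; split <;> simp

lemma binFun_antitone (ξ : NPartition m) {i j : Fin (m+1) → ℕ} (hij : ∀ a, i a ≤ j a) :
    binFun (m + 1) hm ξ j ≤ binFun (m + 1) hm ξ i := by
  rw [binFun_eq, binFun_eq]
  have h1 : ξ.toFun (Fin.init j) ≤ ξ.toFun (Fin.init i) :=
    ξ.antitone (fun a => hij _)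
  have h2 : i (Fin.last m) ≤ j (Fin.last m) := hij _
  by_cases hj : j (Fin.last m) < ξ.toFun (Fin.init j)
  · have hi : i (Fin.last m) < ξ.toFun (Fin.init i) :=
      lt_of_le_of_lt h2 (lt_of_lt_of_le hj h1)
    rw [if_pos hj, if_pos hi]
  · rw [if_neg hj]
    split <;> omega

lemma binFun_support_finite (ξ : NPartition m) :
    (Function.support (binFun (m + 1) hm ξ)).Finite := by
  apply Set.Finite.subset (Set.Finite.image (snocEquiv m)
    ((ξ.finite.prod (Set.finite_Iio (ξ.toFun (fun _ => 0))))))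
  intro j hj
  rw [Function.mem_support, binFun_eq] at hj
  have hlt : j (Fin.last m) < ξ.toFun (Fin.init j) := by
    by_contra hc; rw [if_neg hc] at hj; exact hj rfl
  refine ⟨(Fin.init j, j (Fin.last m)), ⟨?_, ?_⟩, ?_⟩
  · show Fin.init j ∈ Function.support ξ.toFun
    rw [Function.mem_support]; omega
  · show j (Fin.last m) ∈ Set.Iio (ξ.toFun (fun _ => 0))
    have : ξ.toFun (Fin.init j) ≤ ξ.toFun (fun _ => 0) :=
      ξ.antitone (fun a => Nat.zero_le _)
    exact Set.mem_Iio.2 (by omega)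
  · exact Fin.snoc_init_self j

lemma finsum_indicator_lt (c : ℕ) : (∑ᶠ l : ℕ, if l < c then (1:ℕ) else 0) = c := by
  rw [finsum_eq_sum_of_support_subset _ (s := Finset.range c) (by
    intro x hx
    rw [Function.mem_support] at hx
    simp only [Finset.coe_range, Set.mem_Iio]
    by_contra hc
    rw [if_neg hc] at hx
    exact hx rfl)]
  rw [Finset.sum_congr rfl (fun x hx => if_pos (Finset.mem_range.1 hx))]
  simp

lemma binFun_size (ξ : NPartition m) :
    (∑ᶠ j, binFun (m + 1) hm ξ j) = ξ.size := by
  rw [← finsum_comp_equiv (snocEquiv m)]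
  have : ∀ p : (Fin m → ℕ) × ℕ, binFun (m+1) hm ξ (snocEquiv m p)
      = if p.2 < ξ.toFun p.1 then 1 else 0 := fun p => binFun_snoc hm ξ p.1 p.2
  rw [finsum_congr this]
  rw [finsum_curry _ ?fin]
  case fin =>
    have hsub : (Function.support fun p : (Fin m → ℕ) × ℕ =>
        if p.2 < ξ.toFun p.1 then (1:ℕ) else 0)
        ⊆ (snocEquiv m) ⁻¹' (Function.support (binFun (m+1) hm ξ)) := by
      intro p hp
      simp only [Set.mem_preimage, Function.mem_support]
      rw [show binFun (m+1) hm ξ (snocEquiv m p) = _ from binFun_snoc hm ξ p.1 p.2]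
      exact hp
    exact Set.Finite.subset
      (Set.Finite.preimage ((snocEquiv m).injective.injOn) (binFun_support_finite hm ξ)) hsub
  · exact finsum_congr fun h => finsum_indicator_lt (ξ.toFun h)

end Bin

section Pi

variable {m : ℕ} (hm : 1 ≤ m + 1)

abbrev Xi (m : ℕ) : Type := {ξ : NPartition (m + 1 - 1) // ξ.toFun ≠ 0}

lemma one_le_toFun_zero (ξ : Xi m) : 1 ≤ ξ.1.toFun 0 := by
  obtain ⟨i, hi⟩ := Function.ne_iff.1 ξ.2
  have := ξ.1.antitone (i := 0) (j := i) (fun a => Nat.zero_le _)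
  simp only [Pi.zero_apply] at hi
  omega

lemma one_le_size (ξ : Xi m) : 1 ≤ ξ.1.size :=
  le_trans (one_le_toFun_zero ξ) (ξ.1.toFun_le_size 0)

lemma binFun_apply_zero (ξ : Xi m) : binFun (m + 1) hm ξ.1 0 = 1 := by
  rw [binFun_eq]
  have h0 : Fin.init (0 : Fin (m+1) → ℕ) = (0 : Fin m → ℕ) := rfl
  rw [if_pos]
  show (0:ℕ) < ξ.1.toFun (Fin.init (0 : Fin (m+1) → ℕ))
  rw [h0]
  have := one_le_toFun_zero ξ
  omega

noncomputable def mkPi (w : Xi m → ℕ) (hw : (Function.support w).Finite) :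
    NPartition (m + 1) where
  toFun j := ∑ ξ ∈ hw.toFinset, w ξ * binFun (m + 1) hm ξ.1 j
  antitone i j hij := Finset.sum_le_sum
    (fun ξ _ => Nat.mul_le_mul_left _ (binFun_antitone hm ξ.1 hij))
  finite := by
    apply Set.Finite.subset (Set.Finite.biUnion hw.toFinset.finite_toSet
      (fun ξ _ => binFun_support_finite hm ξ.1))
    intro j hj
    rw [Function.mem_support] at hj
    by_contra hc
    apply hj
    apply Finset.sum_eq_zero
    intro ξ hξ
    have : j ∉ Function.support (binFun (m+1) hm ξ.1) := by
      intro hmem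
      exact hc (Set.mem_biUnion hξ hmem)
    rw [Function.mem_support, not_not] at this
    rw [this, mul_zero]

lemma mkPi_toFun (w : Xi m → ℕ) (hw : (Function.support w).Finite) (j : Fin (m+1) → ℕ) :
    (mkPi hm w hw).toFun j = ∑ᶠ ξ, w ξ * binFun (m + 1) hm ξ.1 j := by
  rw [finsum_eq_sum_of_support_subset _ (s := hw.toFinset) (by
    intro ξ hξ
    rw [Function.mem_support] at hξ
    rw [Set.Finite.coe_toFinset, Function.mem_support]
    intro h0
    rw [h0, zero_mul] at hξ
    exact hξ rfl)]
  rfl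

lemma mkPi_zero (w : Xi m → ℕ) (hw : (Function.support w).Finite) :
    (mkPi hm w hw).toFun 0 = ∑ᶠ ξ, w ξ := by
  show (∑ ξ ∈ hw.toFinset, w ξ * binFun (m + 1) hm ξ.1 0) = _
  rw [finsum_eq_sum _ hw]
  apply Finset.sum_congr rfl
  intro ξ _
  rw [binFun_apply_zero hm ξ, mul_one]

lemma mkPi_size (w : Xi m → ℕ) (hw : (Function.support w).Finite) :
    (mkPi hm w hw).size = ∑ᶠ ξ, w ξ * ξ.1.size := by
  have h1 : (mkPi hm w hw).size
      = ∑ᶠ j, ∑ ξ ∈ hw.toFinset, w ξ * binFun (m + 1) hm ξ.1 j := rfl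
  rw [h1, finsum_sum_comm _ _ (fun ξ _ => by
    apply Set.Finite.subset (binFun_support_finite hm ξ.1)
    intro j hj
    rw [Function.mem_support] at hj ⊢
    intro h0
    rw [h0, mul_zero] at hj
    exact hj rfl)]
  rw [finsum_eq_sum_of_support_subset (fun ξ => w ξ * ξ.1.size) (s := hw.toFinset) (by
    intro ξ hξ
    rw [Function.mem_support] at hξ
    rw [Set.Finite.coe_toFinset, Function.mem_support]
    intro h0
    rw [h0, zero_mul] at hξ
    exact hξ rfl)]
  apply Finset.sum_congr rfl
  intro ξ _
  rw [← mul_finsum _ _, binFun_size hm ξ.1]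

lemma mem_cset_iff (π : NPartition (m+1)) (w : Xi m → ℕ) :
    w ∈ Cset (m+1) hm π ↔ ∃ hw : (Function.support w).Finite, π = mkPi hm w hw := by
  constructor
  · rintro ⟨hw, hval⟩
    refine ⟨hw, NPartition.ext' ?_⟩
    funext j
    rw [hval j, mkPi_toFun]
  · rintro ⟨hw, rfl⟩
    refine ⟨hw, fun j => ?_⟩
    show (mkPi hm w hw).toFun j = ∑ᶠ ξ : Xi m, w ξ * binFun (m+1) hm ξ.1 j
    exact mkPi_toFun hm w hw j

end Pi

section Count

open Classical in
noncomputable instance : DecidableEq (NPartition m) := Classical.decEq _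

variable {m : ℕ} (hm : 1 ≤ m + 1)

def setS (m a b : ℕ) : Set (NPartition (m+1)) := {π | π.toFun 0 = a ∧ π.size = b}

def setM (m a b : ℕ) : Set (Xi m → ℕ) :=
  {w | (Function.support w).Finite ∧ (∑ᶠ ξ, w ξ) = a ∧ (∑ᶠ ξ, w ξ * ξ.1.size) = b}

lemma setS_finite (a b : ℕ) : (setS m a b).Finite :=
  (NPartition.finite_size_le (m+1) b).subset (fun _ hπ => le_of_eq hπ.2)

lemma xiSize_finite (m b : ℕ) : {ξ : Xi m | ξ.1.size ≤ b}.Finite :=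
  Set.Finite.subset
    ((NPartition.finite_size_le (m+1-1) b).preimage (Subtype.val_injective.injOn))
    (fun _ h => h)

noncomputable def Fb (m b : ℕ) : Finset (Xi m) := (xiSize_finite m b).toFinset

open Classical in
noncomputable def Afin (m a b : ℕ) : Finset (Xi m → ℕ) :=
  (Finset.piAntidiag (Fb m b) a).filter (fun k => ∑ ξ ∈ Fb m b, k ξ * ξ.1.size = b)

lemma support_subset_Fb {a b : ℕ} {w : Xi m → ℕ} (hw : w ∈ setM m a b) :
    Function.support w ⊆ ↑(Fb m b) := by
  obtain ⟨hfin, hsum, hsize⟩ := hw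
  intro ξ hξ
  rw [Function.mem_support] at hξ
  have hterm : w ξ * ξ.1.size ≤ b := by
    rw [← hsize]
    apply single_le_finsum ξ (hfin.subset (fun x hx => by
      rw [Function.mem_support] at hx ⊢
      intro h0; rw [h0, zero_mul] at hx; exact hx rfl))
    exact fun _ => Nat.zero_le _
  have h1 : 1 ≤ w ξ := Nat.one_le_iff_ne_zero.2 hξ
  have h2 : 1 ≤ ξ.1.size := one_le_size ξ
  have : ξ.1.size ≤ b := le_trans (le_trans (Nat.le_mul_of_pos_left _ h1) (le_refl _)) hterm
  simp only [Fb, Set.Finite.coe_toFinset, Set.mem_setOf_eq]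
  exact this

lemma setM_eq_Afin (a b : ℕ) : setM m a b = ↑(Afin m a b) := by
  classical
  ext w
  simp only [Afin, Finset.coe_filter, Set.mem_setOf_eq, Finset.mem_piAntidiag]
  constructor
  · intro hw
    have hsupp := support_subset_Fb hw
    obtain ⟨hfin, hsum, hsize⟩ := hw
    refine ⟨⟨?_, fun ξ hξ => hsupp hξ⟩, ?_⟩
    · rw [← hsum, finsum_eq_sum_of_support_subset _ hsupp]
    · rw [← finsum_eq_sum_of_support_subset (fun ξ => w ξ * ξ.1.size) (s := Fb m b)
        (fun x hx => hsupp (by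
          rw [Function.mem_support] at hx ⊢
          intro h0; rw [h0, zero_mul] at hx; exact hx rfl))]
      exact hsize
  · rintro ⟨⟨hsum, hsupp⟩, hsize⟩
    have hs : Function.support w ⊆ ↑(Fb m b) := fun ξ hξ => hsupp ξ hξ
    have hfin : (Function.support w).Finite := (Fb m b).finite_toSet.subset hs
    refine ⟨hfin, ?_, ?_⟩
    · rw [finsum_eq_sum_of_support_subset _ hs, hsum]
    · rw [finsum_eq_sum_of_support_subset (fun ξ => w ξ * ξ.1.size) (s := Fb m b)
        (fun x hx => hs (by
          rw [Function.mem_support] at hx ⊢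
          intro h0; rw [h0, zero_mul] at hx; exact hx rfl)), hsize]

lemma setM_finite (a b : ℕ) : (setM m a b).Finite := by
  rw [setM_eq_Afin]; exact (Afin m a b).finite_toSet

lemma union_cset (a b : ℕ) :
    (⋃ π ∈ setS m a b, Cset (m+1) hm π) = setM m a b := by
  ext w
  simp only [Set.mem_iUnion, exists_prop]
  constructor
  · rintro ⟨π, hπS, hπC⟩
    obtain ⟨hw, rfl⟩ := (mem_cset_iff hm π w).1 hπC
    obtain ⟨hzero, hsize⟩ := hπS
    exact ⟨hw, by rw [← mkPi_zero hm w hw]; exact hzero,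
      by rw [← mkPi_size hm w hw]; exact hsize⟩
  · rintro ⟨hw, hsum, hsize⟩
    refine ⟨mkPi hm w hw, ⟨?_, ?_⟩, (mem_cset_iff hm _ w).2 ⟨hw, rfl⟩⟩
    · rw [mkPi_zero hm w hw]; exact hsum
    · rw [mkPi_size hm w hw]; exact hsize

lemma cset_disjoint (a b : ℕ) : (setS m a b).PairwiseDisjoint (Cset (m+1) hm) := by
  intro π _ π' _ hne
  rw [Function.onFun, Set.disjoint_left]
  intro w hw hw'
  obtain ⟨h1, rfl⟩ := (mem_cset_iff hm π w).1 hw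
  obtain ⟨h2, heq⟩ := (mem_cset_iff hm π' w).1 hw'
  exact hne heq.symm

lemma cset_finite_of_mem {a b : ℕ} {π : NPartition (m+1)} (hπ : π ∈ setS m a b) :
    (Cset (m+1) hm π).Finite := by
  apply (setM_finite a b).subset
  intro w hw
  rw [← union_cset hm a b]
  exact Set.mem_biUnion hπ hw

end Count

section Series

open PowerSeries

variable {m : ℕ}

lemma card_size_zero : Nat.card {π : NPartition m // π.size = 0} = 1 := by
  rw [Nat.card_eq_one_iff_unique]
  constructor
  · constructor
    intro x y
    apply Subtype.ext
    apply NPartition.ext'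
    rw [NPartition.toFun_eq_zero_of_size_eq_zero x.2, NPartition.toFun_eq_zero_of_size_eq_zero y.2]
  · exact ⟨⟨⟨fun _ => 0, fun _ _ _ => le_refl _, by simp⟩, by
      show (∑ᶠ _ : Fin m → ℕ, (0:ℕ)) = 0
      exact finsum_zero⟩⟩

noncomputable def Gser (m b : ℕ) : PowerSeries ℚ :=
  ∑ ξ ∈ Fb m b, (PowerSeries.monomial ξ.1.size) (1 : ℚ)

lemma coeff_MG {b i : ℕ} (hib : i ≤ b) :
    (PowerSeries.coeff i) (Mser (m+1-1) - 1) = (PowerSeries.coeff i) (Gser m b) := by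
  classical
  have hG : (PowerSeries.coeff i) (Gser m b)
      = (((Fb m b).filter (fun ξ => i = ξ.1.size)).card : ℚ) := by
    rw [Gser, map_sum]
    rw [Finset.sum_congr rfl (fun ξ _ => PowerSeries.coeff_monomial i ξ.1.size (1:ℚ))]
    rw [Finset.sum_boole]
  rw [hG, map_sub, Mser, PowerSeries.coeff_mk, PowerSeries.coeff_one]
  rcases Nat.eq_zero_or_pos i with rfl | hi
  · rw [if_pos rfl, card_size_zero]
    have : (Fb m b).filter (fun ξ => 0 = ξ.1.size) = ∅ := by
      apply Finset.filter_eq_empty_iff.2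
      intro ξ _
      have := one_le_size ξ
      omega
    rw [this]
    simp
  · rw [if_neg (by omega)]
    have he : {π : NPartition (m+1-1) // π.size = i}
        ≃ {x : Xi m // x ∈ (Fb m b).filter (fun ξ => i = ξ.1.size)} := by
      refine ⟨fun π => ⟨⟨π.1, fun h0 => by
          have : π.1.size = 0 := by
            show (∑ᶠ i, π.1.toFun i) = 0
            rw [h0]; exact finsum_zero
          omega⟩, ?_⟩, fun x => ⟨x.1.1, ?_⟩, fun π => rfl, fun x => rfl⟩
      · rw [Finset.mem_filter]
        constructor
        · show _ ∈ Fb m b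
          simp only [Fb, Set.Finite.mem_toFinset, Set.mem_setOf_eq]
          show π.1.size ≤ b
          rw [π.2]; exact hib
        · show i = π.1.size
          rw [π.2]
      · have := (Finset.mem_filter.1 x.2).2
        exact this.symm
    rw [Nat.card_congr he, Nat.card_eq_finsetCard]
    simp

lemma coeff_pow_eq (a b : ℕ) :
    (PowerSeries.coeff b) ((Mser (m+1-1) - 1) ^ a)
      = (PowerSeries.coeff b) ((Gser m b) ^ a) := by
  have htr : PowerSeries.trunc (b+1) (Mser (m+1-1) - 1) = PowerSeries.trunc (b+1) (Gser m b) := by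
    apply Polynomial.ext
    intro i
    rw [PowerSeries.coeff_trunc, PowerSeries.coeff_trunc]
    split_ifs with h
    · exact coeff_MG (by omega)
    · rfl
  have key : ∀ X : PowerSeries ℚ, (PowerSeries.coeff b) (X ^ a)
      = (PowerSeries.trunc (b+1) (((PowerSeries.trunc (b+1) X : Polynomial ℚ) : PowerSeries ℚ) ^ a)).coeff b := by
    intro X
    rw [PowerSeries.trunc_trunc_pow, PowerSeries.coeff_trunc, if_pos (by omega)]
  rw [key, key, htr]

open Classical in
lemma coeff_G_pow (a b : ℕ) :
    (PowerSeries.coeff b) ((Gser m b) ^ a)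
      = ∑ k ∈ Afin m a b, (Nat.multinomial (Fb m b) k : ℚ) := by
  classical
  rw [Gser, Finset.sum_pow_eq_sum_piAntidiag, map_sum]
  have hterm : ∀ k : Xi m → ℕ,
      (PowerSeries.coeff b) ((Nat.multinomial (Fb m b) k : PowerSeries ℚ)
        * ∏ ξ ∈ Fb m b, ((PowerSeries.monomial ξ.1.size) (1:ℚ)) ^ k ξ)
      = if (∑ ξ ∈ Fb m b, k ξ * ξ.1.size = b) then (Nat.multinomial (Fb m b) k : ℚ) else 0 := by
    intro k
    have hprod : (∏ ξ ∈ Fb m b, ((PowerSeries.monomial ξ.1.size) (1:ℚ)) ^ k ξ)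
        = (PowerSeries.X : PowerSeries ℚ) ^ (∑ ξ ∈ Fb m b, ξ.1.size * k ξ) := by
      rw [← Finset.prod_pow_eq_pow_sum]
      apply Finset.prod_congr rfl
      intro ξ _
      rw [← PowerSeries.X_pow_eq, ← pow_mul]
    rw [hprod]
    have hc : (Nat.multinomial (Fb m b) k : PowerSeries ℚ)
        = PowerSeries.C ((Nat.multinomial (Fb m b) k : ℚ)) := by
      rw [← map_natCast (PowerSeries.C (R := ℚ))]
    rw [hc, PowerSeries.coeff_C_mul, PowerSeries.coeff_X_pow]
    rw [mul_ite, mul_one, mul_zero]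
    have hcond : (b = ∑ ξ ∈ Fb m b, ξ.1.size * k ξ) ↔ (∑ ξ ∈ Fb m b, k ξ * ξ.1.size = b) := by
      rw [Finset.sum_congr rfl (fun ξ _ => mul_comm (ξ.1.size) (k ξ))]
      exact eq_comm
    exact if_congr hcond rfl rfl
  rw [Finset.sum_congr rfl (fun k _ => hterm k)]
  rw [Afin, Finset.sum_filter]

end Series

theorem stmt_14 (n : ℕ) (hn : 1 ≤ n) :
    (PowerSeries.mk fun a => PowerSeries.mk fun b =>
        ∑ᶠ π ∈ {π : NPartition n | π.toFun 0 = a ∧ π.size = b}, omegaC n hn π) =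
      (PowerSeries.mk fun a =>
        PowerSeries.C (1 / (Nat.factorial a) : ℚ) * (Mser (n - 1) - 1) ^ a :
        PowerSeries (PowerSeries ℚ)) := by
  obtain ⟨m, rfl⟩ : ∃ m, n = m + 1 := ⟨n - 1, by omega⟩
  apply PowerSeries.ext
  intro a
  rw [PowerSeries.coeff_mk, PowerSeries.coeff_mk]
  apply PowerSeries.ext
  intro b
  rw [PowerSeries.coeff_mk]
  -- Right-hand side
  rw [PowerSeries.coeff_C_mul, coeff_pow_eq a b, coeff_G_pow a b]
  -- Left-hand side
  have h1 : (∑ᶠ π ∈ {π : NPartition (m+1) | π.toFun 0 = a ∧ π.size = b}, omegaC (m+1) hn π)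
      = ∑ᶠ π ∈ setS m a b, ∑ᶠ w ∈ Cset (m+1) hn π,
          ∏ᶠ ξ, (1 / (Nat.factorial (w ξ)) : ℚ) := rfl
  have h2 : (∑ᶠ w ∈ ⋃ π ∈ setS m a b, Cset (m+1) hn π,
        ∏ᶠ ξ, (1 / (Nat.factorial (w ξ)) : ℚ))
      = ∑ᶠ π ∈ setS m a b, ∑ᶠ w ∈ Cset (m+1) hn π,
          ∏ᶠ ξ, (1 / (Nat.factorial (w ξ)) : ℚ) :=
    finsum_mem_biUnion (cset_disjoint hn a b) (setS_finite a b)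
      (fun _ hπ => cset_finite_of_mem hn hπ)
  rw [h1, ← h2, union_cset hn a b, setM_eq_Afin a b, finsum_mem_coe_finset, Finset.mul_sum]
  -- termwise
  apply Finset.sum_congr rfl
  intro k hk
  have hk1 := (Finset.mem_filter.1 hk).1
  obtain ⟨hsum, hsupp⟩ := Finset.mem_piAntidiag.1 hk1
  have hW : (∏ᶠ ξ, (1 / (Nat.factorial (k ξ)) : ℚ))
      = ∏ ξ ∈ Fb m b, (1 / (Nat.factorial (k ξ)) : ℚ) := by
    apply finprod_eq_prod_of_mulSupport_subset
    intro ξ hξ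
    rw [Function.mem_mulSupport] at hξ
    by_contra hc
    have h0 : k ξ = 0 := by
      by_contra h0
      exact hc (hsupp ξ h0)
    rw [h0] at hξ
    simp at hξ
  rw [hW]
  -- factorial identity
  have hspec := Nat.multinomial_spec (Fb m b) k
  rw [hsum] at hspec
  have hq := congrArg (fun t : ℕ => (t : ℚ)) hspec
  push_cast at hq
  have hP : (∏ ξ ∈ Fb m b, ((Nat.factorial (k ξ)) : ℚ)) ≠ 0 :=
    Finset.prod_ne_zero_iff.2 (fun ξ _ => by exact_mod_cast (Nat.factorial_pos _).ne')
  have ha : ((Nat.factorial a : ℕ) : ℚ) ≠ 0 := by exact_mod_cast (Nat.factorial_pos _).ne'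
  have hprodinv : (∏ ξ ∈ Fb m b, (1 / (Nat.factorial (k ξ)) : ℚ))
      = 1 / ∏ ξ ∈ Fb m b, ((Nat.factorial (k ξ)) : ℚ) := by
    rw [Finset.prod_congr rfl (fun ξ _ => one_div ((Nat.factorial (k ξ) : ℚ)))]
    rw [Finset.prod_inv_distrib, one_div]
  rw [hprodinv]
  rw [div_mul_eq_mul_div, one_mul, div_eq_div_iff hP ha, one_mul, mul_comm]
  exact hq.symm
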